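/- Let Fix(Ψ) = {h ∈ C(K) : Ψ(h) = h} and let A be the norm-closed subalgebra of C(K) generated by Fix(Ψ). Then the restriction map ρ : A → C(∂U), ρ(f) = f|_{∂U}, is surjective. -/

import Mathlib

open MeasureTheory Filter Topology ComplexOrder

/-- `Φ` is a Markov operator on the bounded Borel measurable functions on `U`:
for each `x` there is a Borel probability measure `P x` representing `Φ` at `x`. -/
def IsMarkovOperator {U : Type*} [MeasurableSpace U]
    (Φ : (U → ℂ) → (U → ℂ)) : Prop :=
  ∀ x : U, ∃ P : Measure U, IsProbabilityMeasure P ∧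
    ∀ f : U → ℂ, Measurable f → (∃ C : ℝ, ∀ y, ‖f y‖ ≤ C) →
      Φ f x = ∫ y, f y ∂P

/-- `Φ` has the strong Feller property: it maps bounded Borel measurable
functions to continuous functions. -/
def HasStrongFeller {U : Type*} [MeasurableSpace U] [TopologicalSpace U]
    (Φ : (U → ℂ) → (U → ℂ)) : Prop :=
  ∀ f : U → ℂ, Measurable f → (∃ C : ℝ, ∀ y, ‖f y‖ ≤ C) → Continuous (Φ f)

/-- Boundary condition (A): for each boundary point `x` there is a barrier
`h ∈ C(K)` with `h x = 0`, `h < 0` off `x`, and `Φ (h_U) ≥ h_U` on `U`. -/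
def CondA {K : Type*} [TopologicalSpace K] (U : Set K)
    (Φ : (↥U → ℂ) → (↥U → ℂ)) : Prop :=
  ∀ x ∈ Uᶜ, ∃ h : C(K, ℂ), h x = 0 ∧ (∀ y : K, y ≠ x → h y < 0) ∧
    ∀ u : ↥U, h u.1 ≤ Φ (fun v : ↥U => h v.1) u

/-- Maximum principle (B): every real-valued `g ∈ C(K)` with `Φ (g_U) ≥ g_U`
on `U` attaining its global maximum inside `U` is constant. -/
def CondB {K : Type*} [TopologicalSpace K] (U : Set K)
    (Φ : (↥U → ℂ) → (↥U → ℂ)) : Prop :=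
  ∀ g : C(K, ℂ), (∀ x : K, (g x).im = 0) →
    (∀ u : ↥U, g u.1 ≤ Φ (fun v : ↥U => g v.1) u) →
    (∃ z ∈ U, ∀ x : K, g x ≤ g z) →
    ∀ x y : K, g x = g y

/-- The map `Ψ` : `Ψ f = Φ (f_U)` on `U` and `Ψ f = f` on `∂U = K \ U`. -/
noncomputable def psiFun {K : Type*} (U : Set K)
    (Φ : (↥U → ℂ) → (↥U → ℂ)) (f : K → ℂ) : K → ℂ :=
  open Classical in fun x => if hx : x ∈ U then Φ (fun v : ↥U => f v.1) ⟨x, hx⟩ else f x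

section Aux
set_option linter.unusedSectionVars false

variable {K : Type*} [MetricSpace K] [CompactSpace K] [MeasurableSpace K] [BorelSpace K]
variable {U : Set K} {Φ : (↥U → ℂ) → (↥U → ℂ)}

lemma meas_res {f : K → ℂ} (hf : Measurable f) : Measurable fun v : ↥U => f v.1 :=
  hf.comp measurable_subtype_coe

lemma bdd_res {f : K → ℂ} (hf : ∃ C, ∀ y, ‖f y‖ ≤ C) :
    ∃ C, ∀ v : ↥U, ‖f v.1‖ ≤ C := ⟨hf.choose, fun v => hf.choose_spec v.1⟩

lemma psi_apply_of_mem (f : K → ℂ) {x : K} (hx : x ∈ U) :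
    psiFun U Φ f x = Φ (fun v : ↥U => f v.1) ⟨x, hx⟩ := dif_pos hx

lemma psi_apply_of_not (f : K → ℂ) {x : K} (hx : x ∉ U) :
    psiFun U Φ f x = f x := dif_neg hx

lemma psi_rep (hM : IsMarkovOperator Φ) {x : K} (hx : x ∈ U) :
    ∃ P : Measure ↥U, IsProbabilityMeasure P ∧
      ∀ f : K → ℂ, Measurable f → (∃ C : ℝ, ∀ y, ‖f y‖ ≤ C) →
        psiFun U Φ f x = ∫ v, f v.1 ∂P := by
  obtain ⟨P, hP, hrep⟩ := hM ⟨x, hx⟩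
  refine ⟨P, hP, fun f hfm hfb => ?_⟩
  rw [psi_apply_of_mem f hx, hrep _ (meas_res hfm) (bdd_res hfb)]

lemma integrable_of_bdd {P : Measure ↥U} [IsProbabilityMeasure P] {f : K → ℂ}
    (hfm : Measurable f) {C : ℝ} (hC : ∀ y, ‖f y‖ ≤ C) :
    Integrable (fun v : ↥U => f v.1) P :=
  (integrable_const C).mono' (meas_res hfm).aestronglyMeasurable
    (Filter.Eventually.of_forall fun v => hC v.1)

end Aux

section Aux2
set_option linter.unusedSectionVars false

variable {K : Type*} [MetricSpace K] [CompactSpace K] [MeasurableSpace K] [BorelSpace K]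
variable {U : Set K} {Φ : (↥U → ℂ) → (↥U → ℂ)}

lemma psi_measurable (hUopen : IsOpen U) (hSF : HasStrongFeller Φ) {f : K → ℂ}
    (hfm : Measurable f) (hfb : ∃ C : ℝ, ∀ y, ‖f y‖ ≤ C) :
    Measurable (psiFun U Φ f) := by
  apply measurable_of_restrict_of_restrict_compl hUopen.measurableSet
  · have h1 : U.domRestrict (psiFun U Φ f) = Φ (fun v : ↥U => f v.1) := by
      funext v
      exact psi_apply_of_mem f v.2
    rw [h1]
    exact (hSF _ (meas_res hfm) (bdd_res hfb)).measurable
  · have h2 : Uᶜ.domRestrict (psiFun U Φ f) = fun v : ↥(Uᶜ) => f v.1 :=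
      funext fun v => psi_apply_of_not f v.2
    rw [h2]
    exact hfm.comp measurable_subtype_coe

lemma psi_bdd (hM : IsMarkovOperator Φ) {f : K → ℂ} (hfm : Measurable f)
    {C : ℝ} (hC : ∀ y, ‖f y‖ ≤ C) : ∀ y, ‖psiFun U Φ f y‖ ≤ C := by
  intro y
  by_cases hy : y ∈ U
  · obtain ⟨P, hP, hrep⟩ := psi_rep hM hy
    rw [hrep f hfm ⟨C, hC⟩]
    calc ‖∫ v : ↥U, f v.1 ∂P‖ ≤ C * (P Set.univ).toReal :=
          norm_integral_le_of_norm_le_const (Filter.Eventually.of_forall fun v => hC v.1)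
      _ = C := by simp [measure_univ]
  · rw [psi_apply_of_not f hy]; exact hC y

lemma psi_const (hM : IsMarkovOperator Φ) (c : ℂ) :
    psiFun U Φ (fun _ => c) = fun _ => c := by
  funext y
  by_cases hy : y ∈ U
  · obtain ⟨P, hP, hrep⟩ := psi_rep hM hy
    rw [hrep _ measurable_const ⟨‖c‖, fun _ => le_refl _⟩]
    simp [integral_const, measure_univ]
  · exact psi_apply_of_not _ hy

lemma psi_add (hM : IsMarkovOperator Φ) {f g : K → ℂ} (hfm : Measurable f)
    (hfb : ∃ C : ℝ, ∀ y, ‖f y‖ ≤ C) (hgm : Measurable g) (hgb : ∃ C : ℝ, ∀ y, ‖g y‖ ≤ C) :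
    psiFun U Φ (f + g) = psiFun U Φ f + psiFun U Φ g := by
  obtain ⟨Cf, hCf⟩ := hfb
  obtain ⟨Cg, hCg⟩ := hgb
  funext y
  by_cases hy : y ∈ U
  · obtain ⟨P, hP, hrep⟩ := psi_rep hM hy
    have hfgb : ∀ z, ‖(f + g) z‖ ≤ Cf + Cg := fun z =>
      (norm_add_le _ _).trans (add_le_add (hCf z) (hCg z))
    simp only [Pi.add_apply]
    rw [hrep (f + g) (hfm.add hgm) ⟨_, hfgb⟩, hrep f hfm ⟨_, hCf⟩, hrep g hgm ⟨_, hCg⟩]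
    simp only [Pi.add_apply]
    exact integral_add (integrable_of_bdd hfm hCf) (integrable_of_bdd hgm hCg)
  · simp [psi_apply_of_not _ hy, psi_apply_of_not f hy, psi_apply_of_not g hy]

lemma psi_smul (hM : IsMarkovOperator Φ) {f : K → ℂ} (hfm : Measurable f)
    (hfb : ∃ C : ℝ, ∀ y, ‖f y‖ ≤ C) (c : ℂ) :
    psiFun U Φ (c • f) = c • psiFun U Φ f := by
  obtain ⟨Cf, hCf⟩ := hfb
  funext y
  by_cases hy : y ∈ U
  · obtain ⟨P, hP, hrep⟩ := psi_rep hM hy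
    have hcb : ∀ z, ‖(c • f) z‖ ≤ ‖c‖ * Cf := fun z => by
      simp only [Pi.smul_apply, norm_smul]
      exact mul_le_mul_of_nonneg_left (hCf z) (norm_nonneg c)
    simp only [Pi.smul_apply]
    rw [hrep (c • f) (hfm.const_smul c) ⟨_, hcb⟩, hrep f hfm ⟨_, hCf⟩]
    simp only [Pi.smul_apply]
    exact integral_smul c _
  · simp [psi_apply_of_not _ hy, psi_apply_of_not f hy]

end Aux2

section Aux3
set_option linter.unusedSectionVars false

variable {K : Type*} [MetricSpace K] [CompactSpace K] [MeasurableSpace K] [BorelSpace K]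
variable {U : Set K} {Φ : (↥U → ℂ) → (↥U → ℂ)}

lemma psi_mono (hM : IsMarkovOperator Φ) {f g : K → ℂ} (hfm : Measurable f)
    {Cf : ℝ} (hCf : ∀ y, ‖f y‖ ≤ Cf) (hgm : Measurable g) {Cg : ℝ} (hCg : ∀ y, ‖g y‖ ≤ Cg)
    (hle : ∀ y, f y ≤ g y) : ∀ y, psiFun U Φ f y ≤ psiFun U Φ g y := by
  intro y
  by_cases hy : y ∈ U
  · obtain ⟨P, hP, hrep⟩ := psi_rep hM hy
    rw [hrep f hfm ⟨_, hCf⟩, hrep g hgm ⟨_, hCg⟩]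
    have hif : Integrable (fun v : ↥U => f v.1) P := integrable_of_bdd hfm hCf
    have hig : Integrable (fun v : ↥U => g v.1) P := integrable_of_bdd hgm hCg
    rw [Complex.le_def]
    constructor
    · have h1 := integral_re hif
      have h2 := integral_re hig
      simp only [RCLike.re_to_complex] at h1 h2
      rw [← h1, ← h2]
      refine integral_mono hif.re hig.re fun v => ?_
      exact (Complex.le_def.mp (hle v.1)).1
    · have h1 := integral_im hif
      have h2 := integral_im hig
      simp only [RCLike.im_to_complex] at h1 h2
      rw [← h1, ← h2]
      congr 1
      funext v
      exact (Complex.le_def.mp (hle v.1)).2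
  · rw [psi_apply_of_not f hy, psi_apply_of_not g hy]; exact hle y

lemma psi_norm_le (hM : IsMarkovOperator Φ) {f : K → ℂ} (hfm : Measurable f)
    {Cf : ℝ} (hCf : ∀ y, ‖f y‖ ≤ Cf) :
    ∀ y, (‖psiFun U Φ f y‖ : ℂ) ≤ psiFun U Φ (fun z => (‖f z‖ : ℂ)) y := by
  intro y
  by_cases hy : y ∈ U
  · obtain ⟨P, hP, hrep⟩ := psi_rep hM hy
    have hnm : Measurable fun z => (‖f z‖ : ℂ) :=
      Complex.measurable_ofReal.comp hfm.norm
    have hnb : ∀ z, ‖(‖f z‖ : ℂ)‖ ≤ Cf := fun z => by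
      rw [Complex.norm_real, Real.norm_eq_abs, abs_of_nonneg (norm_nonneg _)]
      exact hCf z
    rw [hrep f hfm ⟨_, hCf⟩, hrep _ hnm ⟨_, hnb⟩]
    have : ∫ v : ↥U, ((‖f v.1‖ : ℝ) : ℂ) ∂P = ((∫ v : ↥U, ‖f v.1‖ ∂P : ℝ) : ℂ) :=
      integral_ofReal
    rw [this, Complex.real_le_real]
    exact norm_integral_le_integral_norm _
  · rw [psi_apply_of_not f hy, psi_apply_of_not _ hy]

lemma psi_im (hM : IsMarkovOperator Φ) {f : K → ℂ} (hfm : Measurable f)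
    {Cf : ℝ} (hCf : ∀ y, ‖f y‖ ≤ Cf) (hre : ∀ y, (f y).im = 0) :
    ∀ y, (psiFun U Φ f y).im = 0 := by
  intro y
  by_cases hy : y ∈ U
  · obtain ⟨P, hP, hrep⟩ := psi_rep hM hy
    rw [hrep f hfm ⟨_, hCf⟩]
    have hif : Integrable (fun v : ↥U => f v.1) P := integrable_of_bdd hfm hCf
    have h1 := integral_im hif
    simp only [RCLike.im_to_complex] at h1
    rw [← h1]
    rw [show (fun v : ↥U => (f v.1).im) = fun _ => (0:ℝ) from funext fun v => hre v.1]
    simp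
  · rw [psi_apply_of_not f hy]; exact hre y

end Aux3

section Aux4
set_option linter.unusedSectionVars false

variable {K : Type*} [MetricSpace K] [CompactSpace K] [MeasurableSpace K] [BorelSpace K]
variable {U : Set K} {Φ : (↥U → ℂ) → (↥U → ℂ)}

lemma psi_sub_const (hM : IsMarkovOperator Φ) {f : K → ℂ} (hfm : Measurable f)
    (hfb : ∃ C : ℝ, ∀ y, ‖f y‖ ≤ C) (c : ℂ) :
    psiFun U Φ (fun z => f z - c) = fun z => psiFun U Φ f z - c := by
  have h1 : (fun z => f z - c) = f + (fun _ => -c) := by funext z; simp [sub_eq_add_neg]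
  rw [h1, psi_add hM hfm hfb measurable_const ⟨‖c‖, fun _ => le_of_eq (norm_neg c)⟩,
    psi_const hM (-c)]
  funext z; simp [sub_eq_add_neg]

lemma psi_const_add_smul (hM : IsMarkovOperator Φ) {h : K → ℂ} (hhm : Measurable h)
    (hhb : ∃ C : ℝ, ∀ y, ‖h y‖ ≤ C) (a c : ℂ) :
    psiFun U Φ (fun z => a + c * h z) = fun z => a + c * psiFun U Φ h z := by
  obtain ⟨C, hC⟩ := hhb
  have h1 : (fun z => a + c * h z) = (fun _ => a) + (c • h) := by
    funext z; simp [smul_eq_mul]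
  rw [h1, psi_add hM measurable_const ⟨‖a‖, fun _ => le_refl _⟩ (hhm.const_smul c)
      ⟨‖c‖ * C, fun y => by simpa [norm_smul] using mul_le_mul_of_nonneg_left (hC y) (norm_nonneg c)⟩,
    psi_const hM a, psi_smul hM hhm ⟨C, hC⟩ c]
  funext z; simp [smul_eq_mul]

end Aux4

noncomputable def iterPsi {K : Type*} (U : Set K) (Φ : (↥U → ℂ) → (↥U → ℂ))
    (F : K → ℂ) : ℕ → K → ℂ
  | 0 => F
  | n + 1 => psiFun U Φ (iterPsi U Φ F n)

section MainA
set_option linter.unusedSectionVars false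
set_option maxHeartbeats 1000000

variable {K : Type*} [MetricSpace K] [CompactSpace K] [MeasurableSpace K] [BorelSpace K]
variable {U : Set K} {Φ : (↥U → ℂ) → (↥U → ℂ)}

lemma fixedPoint_of_subsolution (hUopen : IsOpen U) (hM : IsMarkovOperator Φ)
    (hSF : HasStrongFeller Φ) (hA : CondA U Φ) (F : C(K, ℂ))
    (hFim : ∀ y, (F y).im = 0) (hsub : ∀ y, F y ≤ psiFun U Φ (⇑F) y) :
    ∃ g : C(K, ℂ), psiFun U Φ ⇑g = ⇑g ∧ (∀ x, x ∉ U → g x = F x) ∧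
      (∀ y, (g y).im = 0) ∧ (∀ y, F y ≤ g y) ∧
      (∀ M : ℝ, (∀ z, (F z).re ≤ M) → ∀ y, (g y).re ≤ M) := by
  classical
  set u : ℕ → K → ℂ := iterPsi U Φ ⇑F with hu
  have hu0 : u 0 = ⇑F := rfl
  have huS : ∀ n, u (n + 1) = psiFun U Φ (u n) := fun n => rfl
  have hFm : Measurable (⇑F) := F.continuous.measurable
  have hFb : ∀ y, ‖F y‖ ≤ ‖F‖ := fun y => F.norm_coe_le_norm y
  -- basic invariants
  have hInv : ∀ n, Measurable (u n) ∧ (∀ y, ‖u n y‖ ≤ ‖F‖) := by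
    intro n
    induction n with
    | zero => exact ⟨hFm, hFb⟩
    | succ n ih =>
      exact ⟨psi_measurable hUopen hSF ih.1 ⟨‖F‖, ih.2⟩, psi_bdd hM ih.1 ih.2⟩
  have hum : ∀ n, Measurable (u n) := fun n => (hInv n).1
  have hub : ∀ n y, ‖u n y‖ ≤ ‖F‖ := fun n => (hInv n).2
  have huim : ∀ n y, (u n y).im = 0 := by
    intro n
    induction n with
    | zero => exact hFim
    | succ n ih => exact psi_im hM (hum n) (hub n) ih
  have hmono : ∀ n y, u n y ≤ u (n + 1) y := by
    intro n
    induction n with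
    | zero => exact hsub
    | succ n ih =>
      exact psi_mono hM (hum n) (hub n) (hum (n + 1)) (hub (n + 1)) ih
  have hfixB : ∀ n x, x ∉ U → u n x = F x := by
    intro n
    induction n with
    | zero => exact fun x _ => rfl
    | succ n ih =>
      intro x hx
      rw [huS n, psi_apply_of_not _ hx]
      exact ih x hx
  -- the pointwise limit
  have hmonoR : ∀ y, Monotone fun n => (u n y).re := fun y =>
    monotone_nat_of_le_succ fun n => (Complex.le_def.mp (hmono n y)).1
  have hreb : ∀ n y, (u n y).re ≤ ‖F‖ := fun n y =>
    (Complex.re_le_norm _).trans (hub n y)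
  have hbddR : ∀ y, BddAbove (Set.range fun n => (u n y).re) := by
    intro y
    refine ⟨‖F‖, ?_⟩
    rintro r ⟨n, rfl⟩
    exact hreb n y
  set w : K → ℝ := fun y => ⨆ n, (u n y).re with hw
  have hconv : ∀ y, Tendsto (fun n => (u n y).re) atTop (𝓝 (w y)) := fun y =>
    tendsto_atTop_ciSup (hmonoR y) (hbddR y)
  set G : K → ℂ := fun y => ((w y : ℝ) : ℂ) with hG
  have huRe : ∀ n y, u n y = ((u n y).re : ℂ) := by
    intro n y
    apply Complex.ext
    · simp
    · simp [huim n y]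
  have hGtend : ∀ y, Tendsto (fun n => u n y) atTop (𝓝 (G y)) := by
    intro y
    have h1 : Tendsto (fun n => (((u n y).re : ℝ) : ℂ)) atTop (𝓝 ((w y : ℂ))) :=
      (Complex.continuous_ofReal.tendsto _).comp (hconv y)
    convert h1 using 2 with n
    exact huRe n y
  have hGmeas : Measurable G := by
    apply measurable_of_tendsto_metrizable hum
    exact tendsto_pi_nhds.mpr hGtend
  have hGim : ∀ y, (G y).im = 0 := fun y => Complex.ofReal_im (w y)
  have hGbdd : ∀ y, ‖G y‖ ≤ ‖F‖ := by
    intro y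
    have h1 : w y ≤ ‖F‖ := ciSup_le fun n => hreb n y
    have h2 : -‖F‖ ≤ w y := by
      refine le_trans ?_ (le_ciSup (hbddR y) 0)
      have h3 : |(u 0 y).re| ≤ ‖F‖ :=
        (Complex.abs_re_le_norm (u 0 y)).trans (hub 0 y)
      linarith [abs_le.mp h3]
    rw [Complex.norm_real, Real.norm_eq_abs, abs_le]
    exact ⟨h2, h1⟩
  have hGb' : ∃ C : ℝ, ∀ y, ‖G y‖ ≤ C := ⟨‖F‖, hGbdd⟩
  -- fixed point property
  have hGfix : psiFun U Φ G = G := by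
    funext y
    by_cases hy : y ∈ U
    · obtain ⟨P, hP, hrep⟩ := psi_rep hM hy
      rw [hrep G hGmeas hGb']
      have hlim1 : Tendsto (fun n => ∫ v : ↥U, u n v.1 ∂P) atTop (𝓝 (∫ v : ↥U, G v.1 ∂P)) :=
        tendsto_integral_of_dominated_convergence (fun _ => ‖F‖)
          (fun n => (meas_res (hum n)).aestronglyMeasurable) (integrable_const _)
          (fun n => Filter.Eventually.of_forall fun v => hub n v.1)
          (Filter.Eventually.of_forall fun v => hGtend v.1)
      have hlim2 : Tendsto (fun n => ∫ v : ↥U, u n v.1 ∂P) atTop (𝓝 (G y)) := by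
        have heq : ∀ n, ∫ v : ↥U, u n v.1 ∂P = u (n + 1) y := fun n => by
          rw [huS n, hrep (u n) (hum n) ⟨‖F‖, hub n⟩]
        rw [show (fun n => ∫ v : ↥U, u n v.1 ∂P) = fun n => u (n + 1) y from funext heq]
        exact (hGtend y).comp (tendsto_add_atTop_nat 1)
      exact tendsto_nhds_unique hlim1 hlim2
    · exact psi_apply_of_not G hy
  -- boundary values
  have hGbound : ∀ x, x ∉ U → G x = F x := by
    intro x hx
    have h1 : (fun n => (u n x).re) = fun _ => (F x).re :=
      funext fun n => by rw [hfixB n x hx]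
    have h2 : w x = (F x).re := by
      show (⨆ n, (u n x).re) = (F x).re
      rw [show (⨆ n, (u n x).re) = ⨆ n, (F x).re from by rw [← h1], ciSup_const]
    apply Complex.ext
    · show ((w x : ℝ) : ℂ).re = (F x).re
      simpa using h2
    · rw [hGim x, hFim x]
  have hGge : ∀ y, F y ≤ G y := by
    intro y
    rw [Complex.le_def]
    refine ⟨?_, by rw [hFim y, hGim y]⟩
    exact le_ciSup (hbddR y) 0
  have hGleM : ∀ M : ℝ, (∀ z, (F z).re ≤ M) → ∀ y, (G y).re ≤ M := by
    intro M hM' y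
    have hn : ∀ n z, (u n z).re ≤ M := by
      intro n
      induction n with
      | zero => exact hM'
      | succ n ih =>
        intro z
        have hle : ∀ z, u n z ≤ (M : ℂ) := fun z =>
          Complex.le_def.mpr ⟨by simpa using ih z, by simp [huim n z]⟩
        have h2 := psi_mono hM (hum n) (hub n) measurable_const
          (fun _ => le_refl ‖(M : ℂ)‖) hle z
        rw [psi_const hM (M : ℂ)] at h2
        rw [huS n]
        simpa using (Complex.le_def.mp h2).1
    exact ciSup_le fun n => hn n y
  -- barrier estimates
  have hkey : ∀ x₀, x₀ ∉ U → ∀ ε : ℝ, 0 < ε →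
      ∃ q : K → ℝ, Continuous q ∧ q x₀ = 0 ∧ (∀ y, 0 ≤ q y) ∧
        ∀ y, ‖G y - F x₀‖ ≤ ε + q y := by
    intro x₀ hx₀ ε hε
    obtain ⟨h, hzero, hneg, hsubh⟩ := hA x₀ hx₀
    have hhim : ∀ y, (h y).im = 0 := by
      intro y
      by_cases hy : y = x₀
      · rw [hy, hzero]; rfl
      · exact (Complex.lt_def.mp (hneg y hy)).2
    have hhre : ∀ y, (h y).re ≤ 0 := by
      intro y
      by_cases hy : y = x₀
      · rw [hy, hzero]; simp
      · exact le_of_lt (Complex.lt_def.mp (hneg y hy)).1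
    have hPsih : ∀ y, h y ≤ psiFun U Φ (⇑h) y := by
      intro y
      by_cases hy : y ∈ U
      · rw [psi_apply_of_mem _ hy]; exact hsubh ⟨y, hy⟩
      · rw [psi_apply_of_not _ hy]
    obtain ⟨c, hc0, hbase⟩ : ∃ c : ℝ, 0 ≤ c ∧
        ∀ y, ‖F y - F x₀‖ ≤ ε + c * (-(h y).re) := by
      by_cases hS : ∀ y, ‖F y - F x₀‖ < ε
      · exact ⟨0, le_refl 0, fun y => by simpa using (hS y).le⟩
      · push_neg at hS
        set S : Set K := {y | ε ≤ ‖F y - F x₀‖} with hSdef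
        have hscl : IsClosed S :=
          isClosed_le continuous_const ((F.continuous.sub continuous_const).norm)
        have hscomp : IsCompact S := hscl.isCompact
        have hcont : ContinuousOn (fun y => -(h y).re) S :=
          ((Complex.continuous_re.comp h.continuous).neg).continuousOn
        obtain ⟨y₀, hy₀S, hy₀min⟩ := hscomp.exists_isMinOn hS hcont
        have hy₀ne : y₀ ≠ x₀ := by
          intro hcon
          have : ε ≤ ‖F x₀ - F x₀‖ := by rwa [hcon] at hy₀S
          simp at this
          linarith
        have hδ : 0 < -(h y₀).re := by
          have := (Complex.lt_def.mp (hneg y₀ hy₀ne)).1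
          simp only [Complex.zero_re] at this
          linarith
        refine ⟨(2 * ‖F‖) / (-(h y₀).re), div_nonneg (by positivity) hδ.le, ?_⟩
        intro y
        by_cases hyS : y ∈ S
        · have h1 : ‖F y - F x₀‖ ≤ 2 * ‖F‖ :=
            (norm_sub_le _ _).trans (by linarith [hFb y, hFb x₀])
          have h2 : -(h y₀).re ≤ -(h y).re := hy₀min hyS
          have h3 : 2 * ‖F‖ ≤ (2 * ‖F‖) / (-(h y₀).re) * (-(h y).re) := by
            rw [div_mul_eq_mul_div, le_div_iff₀ hδ]
            exact mul_le_mul_of_nonneg_left h2 (by positivity)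
          linarith
        · have h4 : ‖F y - F x₀‖ < ε := not_le.mp hyS
          have h5 : 0 ≤ (2 * ‖F‖) / (-(h y₀).re) * (-(h y).re) :=
            mul_nonneg (div_nonneg (by positivity) hδ.le) (by linarith [hhre y])
          linarith
    -- the inductive complex bound
    have hhm : Measurable (⇑h) := h.continuous.measurable
    have hhb : ∀ y, ‖h y‖ ≤ ‖h‖ := fun y => h.norm_coe_le_norm y
    have hBm : Measurable fun z => (ε : ℂ) - (c : ℂ) * h z :=
      (continuous_const.sub (continuous_const.mul h.continuous)).measurable
    have hBb : ∀ z, ‖(ε : ℂ) - (c : ℂ) * h z‖ ≤ |ε| + c * ‖h‖ := by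
      intro z
      refine (norm_sub_le _ _).trans ?_
      have : ‖(c : ℂ) * h z‖ ≤ c * ‖h‖ := by
        rw [norm_mul, Complex.norm_real, Real.norm_eq_abs, abs_of_nonneg hc0]
        exact mul_le_mul_of_nonneg_left (hhb z) hc0
      simp only [Complex.norm_real, Real.norm_eq_abs]
      linarith [this]
    have hcb : ∀ n y, (‖u n y - F x₀‖ : ℂ) ≤ (ε : ℂ) - (c : ℂ) * h y := by
      intro n
      induction n with
      | zero =>
        intro y
        have e0 : u 0 y = F y := rfl
        rw [Complex.le_def]
        constructor
        · simp only [e0, Complex.ofReal_re, Complex.sub_re, Complex.mul_re,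
            Complex.ofReal_im, hhim y]
          linarith [hbase y]
        · simp [e0, hhim y]
      | succ n ih =>
        intro y
        have hvm : Measurable fun z => u n z - F x₀ := (hum n).sub measurable_const
        have hvb : ∀ z, ‖u n z - F x₀‖ ≤ 2 * ‖F‖ := fun z =>
          (norm_sub_le _ _).trans (by linarith [hub n z, hFb x₀])
        have e1 : u (n + 1) y - F x₀ = psiFun U Φ (fun z => u n z - F x₀) y := by
          rw [psi_sub_const hM (hum n) ⟨‖F‖, hub n⟩ (F x₀), huS n]
        rw [e1]
        have step1 := psi_norm_le hM hvm hvb y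
        have hnm : Measurable fun z => (‖u n z - F x₀‖ : ℂ) :=
          Complex.measurable_ofReal.comp hvm.norm
        have hnb : ∀ z, ‖(‖u n z - F x₀‖ : ℂ)‖ ≤ 2 * ‖F‖ := fun z => by
          rw [Complex.norm_real, Real.norm_eq_abs, abs_of_nonneg (norm_nonneg _)]
          exact hvb z
        have step2 := psi_mono hM hnm hnb hBm hBb ih y
        have step3 : psiFun U Φ (fun z => (ε : ℂ) - (c : ℂ) * h z) y
            = (ε : ℂ) - (c : ℂ) * psiFun U Φ (⇑h) y := by
          have e2 : (fun z => (ε : ℂ) - (c : ℂ) * h z)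
              = fun z => (ε : ℂ) + (-(c : ℂ)) * h z := by
            funext z; ring
          have e3 := psi_const_add_smul hM hhm ⟨‖h‖, hhb⟩ (ε : ℂ) (-(c : ℂ))
          rw [e2, e3]; ring
        have step4 : (ε : ℂ) - (c : ℂ) * psiFun U Φ (⇑h) y ≤ (ε : ℂ) - (c : ℂ) * h y := by
          have hcc : (0 : ℂ) ≤ (c : ℂ) := by
            rw [Complex.zero_le_real]; exact hc0
          exact sub_le_sub_left (mul_le_mul_of_nonneg_left (hPsih y) hcc) _
        calc (‖psiFun U Φ (fun z => u n z - F x₀) y‖ : ℂ)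
            ≤ psiFun U Φ (fun z => (‖u n z - F x₀‖ : ℂ)) y := step1
          _ ≤ psiFun U Φ (fun z => (ε : ℂ) - (c : ℂ) * h z) y := step2
          _ = (ε : ℂ) - (c : ℂ) * psiFun U Φ (⇑h) y := step3
          _ ≤ (ε : ℂ) - (c : ℂ) * h y := step4
    -- pass to the limit
    refine ⟨fun y => c * (-(h y).re),
      continuous_const.mul ((Complex.continuous_re.comp h.continuous).neg),
      by show c * -(h x₀).re = 0; rw [hzero]; simp,
      fun y => mul_nonneg hc0 (by linarith [hhre y]), ?_⟩
    intro y
    have hlim : Tendsto (fun n => ‖u n y - F x₀‖) atTop (𝓝 ‖G y - F x₀‖) :=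
      ((hGtend y).sub tendsto_const_nhds).norm
    refine le_of_tendsto hlim (Filter.Eventually.of_forall fun n => ?_)
    have hthis := (Complex.le_def.mp (hcb n y)).1
    simp only [Complex.ofReal_re, Complex.sub_re, Complex.mul_re, Complex.ofReal_im,
      hhim y] at hthis
    show ‖u n y - F x₀‖ ≤ ε + c * -(h y).re
    linarith [hthis]
  -- continuity of G
  have hGcont : Continuous G := by
    rw [continuous_iff_continuousAt]
    intro y₀
    by_cases hy₀ : y₀ ∈ U
    · have hres : U.domRestrict G = Φ fun v : ↥U => G v.1 := by
        funext v
        show G v.1 = Φ (fun w : ↥U => G w.1) v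
        rw [← congrFun hGfix v.1, psi_apply_of_mem G v.2]
      have hcontU : ContinuousOn G U := by
        rw [continuousOn_iff_continuous_restrict, hres]
        exact hSF _ (meas_res hGmeas) (bdd_res hGb')
      exact hcontU.continuousAt (hUopen.mem_nhds hy₀)
    · rw [Metric.continuousAt_iff]
      intro ε hε
      obtain ⟨q, hqc, hq0, hqnn, hqb⟩ := hkey y₀ hy₀ (ε / 4) (by linarith)
      have hnb : {y | q y < ε / 4} ∈ 𝓝 y₀ := by
        have : IsOpen {y | q y < ε / 4} := isOpen_lt hqc continuous_const
        exact this.mem_nhds (by simp [hq0]; linarith)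
      rw [Metric.mem_nhds_iff] at hnb
      obtain ⟨δ, hδ0, hδsub⟩ := hnb
      refine ⟨δ, hδ0, fun {y} hy => ?_⟩
      have hyq : q y < ε / 4 := hδsub hy
      have h1 : ‖G y - F y₀‖ ≤ ε / 4 + q y := hqb y
      have h2 : G y₀ = F y₀ := hGbound y₀ hy₀
      rw [dist_eq_norm, h2]
      linarith
  exact ⟨⟨G, hGcont⟩, hGfix, hGbound, hGim, hGge, hGleM⟩

end MainA

section MainB
set_option linter.unusedSectionVars false
set_option maxHeartbeats 1000000

variable {K : Type*} [MetricSpace K] [CompactSpace K] [MeasurableSpace K] [BorelSpace K]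
variable {U : Set K} {Φ : (↥U → ℂ) → (↥U → ℂ)}

lemma subsolution_approx (hUopen : IsOpen U) (hM : IsMarkovOperator Φ)
    (hA : CondA U Φ) (hne : (Uᶜ : Set K).Nonempty)
    (φ : C(↥(Uᶜ), ℝ)) {m M : ℝ} (hm : ∀ x : ↥(Uᶜ), m ≤ φ x) (hMb : ∀ x : ↥(Uᶜ), φ x ≤ M)
    {ε : ℝ} (hε : 0 < ε) :
    ∃ F : C(K, ℂ), (∀ y, (F y).im = 0) ∧ (∀ y, F y ≤ psiFun U Φ ⇑F y) ∧
      (∀ x : ↥(Uᶜ), φ x - 2 * ε ≤ (F x.1).re ∧ (F x.1).re ≤ φ x) ∧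
      (∀ y : K, m - 2 * ε ≤ (F y).re ∧ (F y).re ≤ M) := by
  classical
  haveI : Nonempty ↥(Uᶜ) := hne.to_subtype
  haveI : CompactSpace ↥(Uᶜ) :=
    isCompact_iff_compactSpace.mp (hUopen.isClosed_compl.isCompact)
  have hmM : m ≤ M := le_trans (hm (Classical.arbitrary _)) (hMb (Classical.arbitrary _))
  -- barriers
  choose hbar hzero hneg hsubb using fun p : ↥(Uᶜ) => hA p.1 p.2
  have him : ∀ (p : ↥(Uᶜ)) (y : K), ((hbar p) y).im = 0 := by
    intro p y
    by_cases hy : y = p.1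
    · rw [hy, hzero p]; rfl
    · exact (Complex.lt_def.mp (hneg p y hy)).2
  have hre0 : ∀ (p : ↥(Uᶜ)) (y : K), ((hbar p) y).re ≤ 0 := by
    intro p y
    by_cases hy : y = p.1
    · rw [hy, hzero p]; simp
    · exact le_of_lt (Complex.lt_def.mp (hneg p y hy)).1
  have hPsih : ∀ (p : ↥(Uᶜ)) (y : K), (hbar p) y ≤ psiFun U Φ ⇑(hbar p) y := by
    intro p y
    by_cases hy : y ∈ U
    · rw [psi_apply_of_mem _ hy]; exact hsubb p ⟨y, hy⟩
    · rw [psi_apply_of_not _ hy]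
  -- coefficients
  have hc : ∀ p : ↥(Uᶜ), ∃ c : ℝ, 0 ≤ c ∧
      ∀ x : ↥(Uᶜ), φ p - ε + c * ((hbar p) x.1).re ≤ φ x := by
    intro p
    by_cases hS : ∀ x : ↥(Uᶜ), φ p - ε < φ x
    · refine ⟨0, le_refl 0, fun x => ?_⟩
      have := (hS x).le
      linarith [this]
    · push_neg at hS
      set S : Set ↥(Uᶜ) := {x | φ x ≤ φ p - ε} with hSdef
      have hscl : IsClosed S := isClosed_le φ.continuous continuous_const
      have hscomp : IsCompact S := hscl.isCompact
      have hcont : ContinuousOn (fun x : ↥(Uᶜ) => -((hbar p) x.1).re) S :=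
        ((Complex.continuous_re.comp
          ((hbar p).continuous.comp continuous_subtype_val)).neg).continuousOn
      obtain ⟨y₀, hy₀S, hy₀min⟩ := hscomp.exists_isMinOn hS hcont
      have hy₀ne : y₀.1 ≠ p.1 := by
        intro hcon
        have h1 : φ y₀ ≤ φ p - ε := hy₀S
        have h2 : y₀ = p := Subtype.ext hcon
        rw [h2] at h1
        linarith
      have hδ : 0 < -((hbar p) y₀.1).re := by
        have := (Complex.lt_def.mp (hneg p y₀.1 hy₀ne)).1
        simp only [Complex.zero_re] at this
        linarith
      refine ⟨max 0 ((φ p - ε - m) / (-((hbar p) y₀.1).re)), le_max_left _ _, ?_⟩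
      intro x
      set cc := max 0 ((φ p - ε - m) / (-((hbar p) y₀.1).re)) with hcc
      by_cases hxS : x ∈ S
      · have h2 : -((hbar p) y₀.1).re ≤ -((hbar p) x.1).re := hy₀min hxS
        by_cases hcase : 0 ≤ φ p - ε - m
        · have hc1 : cc = (φ p - ε - m) / (-((hbar p) y₀.1).re) :=
            max_eq_right (div_nonneg hcase hδ.le)
          have h3 : (φ p - ε - m) ≤
              (φ p - ε - m) / (-((hbar p) y₀.1).re) * (-((hbar p) x.1).re) := by
            rw [div_mul_eq_mul_div, le_div_iff₀ hδ]
            exact mul_le_mul_of_nonneg_left h2 hcase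
          have h6 : (φ p - ε - m) / (-((hbar p) y₀.1).re) * ((hbar p) x.1).re
              = -((φ p - ε - m) / (-((hbar p) y₀.1).re) * (-((hbar p) x.1).re)) := by ring
          rw [hc1]
          linarith [hm x, h3, h6]
        · have hc1 : cc = 0 := by
            apply max_eq_left
            apply le_of_lt
            exact div_neg_of_neg_of_pos (by linarith) hδ
          rw [hc1]
          linarith [hm x]
      · have h4 : φ p - ε < φ x := lt_of_not_ge hxS
        have h5 : cc * ((hbar p) x.1).re ≤ 0 := by
          have := mul_le_mul_of_nonneg_left (hre0 p x.1) (le_max_left 0 ((φ p - ε - m) / (-((hbar p) y₀.1).re)))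
          simpa using this
        linarith
  choose c hc0 hcle using hc
  -- neighbourhoods and compact cover
  set N : ↥(Uᶜ) → Set ↥(Uᶜ) := fun p =>
    {x | c p * (-((hbar p) x.1).re) < ε / 2 ∧ φ x < φ p + ε / 2} with hN
  have hNnhds : ∀ p : ↥(Uᶜ), N p ∈ 𝓝 p := by
    intro p
    apply IsOpen.mem_nhds
    · apply IsOpen.inter
      · exact isOpen_lt (continuous_const.mul ((Complex.continuous_re.comp
          ((hbar p).continuous.comp continuous_subtype_val)).neg)) continuous_const
      · exact isOpen_lt φ.continuous continuous_const
    · constructor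
      · show c p * (-((hbar p) p.1).re) < ε / 2
        rw [hzero p]
        simp
        linarith
      · show φ p < φ p + ε / 2
        linarith
  obtain ⟨t, -, htcov⟩ := isCompact_univ.elim_nhds_subcover N (fun p _ => hNnhds p)
  have htne : t.Nonempty := by
    obtain ⟨x⟩ := (inferInstance : Nonempty ↥(Uᶜ))
    have hx := htcov (Set.mem_univ x)
    rw [Set.mem_iUnion₂] at hx
    obtain ⟨p, hp, _⟩ := hx
    exact ⟨p, hp⟩
  -- the subsolution
  set bmap : ↥(Uᶜ) → C(K, ℝ) := fun p =>
    ⟨fun y => φ p - ε + c p * ((hbar p) y).re,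
      continuous_const.add (continuous_const.mul
        (Complex.continuous_re.comp (hbar p).continuous))⟩ with hbmap
  set F₀ : C(K, ℝ) := ContinuousMap.const K (m - 2 * ε) ⊔ t.sup' htne bmap with hF0
  have hF0app : ∀ y, F₀ y = max (m - 2 * ε)
      (t.sup' htne fun p => φ p - ε + c p * ((hbar p) y).re) := by
    intro y
    rw [hF0, ContinuousMap.sup_apply, ContinuousMap.sup'_apply]
    rfl
  set F : C(K, ℂ) := ⟨fun y => ((F₀ y : ℝ) : ℂ),
    Complex.continuous_ofReal.comp F₀.continuous⟩ with hF
  have hFim : ∀ y, (F y).im = 0 := fun y => Complex.ofReal_im _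
  have hFre : ∀ y, (F y).re = F₀ y := fun y => Complex.ofReal_re _
  -- complexified branches
  set bC : ↥(Uᶜ) → K → ℂ := fun p z =>
    ((φ p - ε : ℝ) : ℂ) + (c p : ℂ) * (hbar p) z with hbC
  have hbCval : ∀ p z, bC p z = ((bmap p z : ℝ) : ℂ) := by
    intro p z
    apply Complex.ext
    · simp [hbC, hbmap, Complex.add_re, Complex.mul_re, him p z]
    · simp [hbC, hbmap, Complex.add_im, Complex.mul_im, him p z]
  have hbCm : ∀ p, Measurable (bC p) :=
    fun p => (continuous_const.add (continuous_const.mul (hbar p).continuous)).measurable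
  have hbCb : ∀ p, ∃ C : ℝ, ∀ z, ‖bC p z‖ ≤ C := by
    intro p
    refine ⟨|φ p - ε| + c p * ‖hbar p‖, fun z => ?_⟩
    refine (norm_add_le _ _).trans ?_
    have h1 : ‖(c p : ℂ) * (hbar p) z‖ ≤ c p * ‖hbar p‖ := by
      rw [norm_mul, Complex.norm_real, Real.norm_eq_abs, abs_of_nonneg (hc0 p)]
      exact mul_le_mul_of_nonneg_left ((hbar p).norm_coe_le_norm z) (hc0 p)
    have h2 : ‖((φ p - ε : ℝ) : ℂ)‖ = |φ p - ε| := by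
      rw [Complex.norm_real, Real.norm_eq_abs]
    linarith
  have hbCsub : ∀ p z, bC p z ≤ psiFun U Φ (bC p) z := by
    intro p z
    have e1 := psi_const_add_smul hM (hbar p).continuous.measurable
      ⟨‖hbar p‖, fun y => (hbar p).norm_coe_le_norm y⟩ ((φ p - ε : ℝ) : ℂ) (c p : ℂ)
    have e2 : psiFun U Φ (bC p) = fun z =>
        ((φ p - ε : ℝ) : ℂ) + (c p : ℂ) * psiFun U Φ ⇑(hbar p) z := e1
    rw [e2]
    have hcc : (0 : ℂ) ≤ (c p : ℂ) := Complex.zero_le_real.mpr (hc0 p)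
    exact add_le_add (le_refl _) (mul_le_mul_of_nonneg_left (hPsih p z) hcc)
  -- branches are below F
  have hble : ∀ p ∈ t, ∀ z, bC p z ≤ F z := by
    intro p hp z
    rw [hbCval p z]
    have h1 : bmap p z ≤ F₀ z := by
      rw [hF0app z]
      exact le_max_of_le_right (Finset.le_sup' (fun q => φ q - ε + c q * ((hbar q) z).re) hp)
    rw [Complex.le_def]
    constructor
    · simpa [hFre] using h1
    · simp only [Complex.ofReal_im, hFim]
  have hconstle : ∀ z, ((m - 2 * ε : ℝ) : ℂ) ≤ F z := by
    intro z
    rw [Complex.le_def]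
    constructor
    · simp only [Complex.ofReal_re, hFre]
      rw [hF0app z]
      exact le_max_left _ _
    · simp only [Complex.ofReal_im, hFim]
  have hFm : Measurable (⇑F) := F.continuous.measurable
  have hFb : ∃ C : ℝ, ∀ y, ‖F y‖ ≤ C := ⟨‖F‖, fun y => F.norm_coe_le_norm y⟩
  -- F is a subsolution
  have hFsub : ∀ y, F y ≤ psiFun U Φ ⇑F y := by
    intro y
    have hsplit := hF0app y
    rcases max_cases (m - 2 * ε) (t.sup' htne fun p => φ p - ε + c p * ((hbar p) y).re)
      with ⟨heq, _⟩ | ⟨heq, _⟩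
    · -- constant branch attains
      have hFyre : F₀ y = m - 2 * ε := by rw [hF0app y, heq]
      have hFy : F y = ((m - 2 * ε : ℝ) : ℂ) := by
        apply Complex.ext
        · rw [hFre, hFyre, Complex.ofReal_re]
        · rw [hFim, Complex.ofReal_im]
      rw [hFy]
      have h1 : psiFun U Φ (fun _ => ((m - 2 * ε : ℝ) : ℂ)) y = ((m - 2 * ε : ℝ) : ℂ) := by
        rw [psi_const hM]
      rw [← h1]
      exact psi_mono hM measurable_const (fun _ => le_refl _) hFm
        (fun z => F.norm_coe_le_norm z) hconstle y
    · -- some cone branch attains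
      obtain ⟨p, hp, hep⟩ := Finset.exists_mem_eq_sup' htne
        (fun p => φ p - ε + c p * ((hbar p) y).re)
      have hFyre : F₀ y = bmap p y := by rw [hF0app y, heq, hep]; rfl
      have hFy : F y = bC p y := by
        rw [hbCval p y]
        apply Complex.ext
        · rw [hFre, hFyre, Complex.ofReal_re]
        · rw [hFim, Complex.ofReal_im]
      obtain ⟨Cp, hCp⟩ := hbCb p
      calc F y = bC p y := hFy
        _ ≤ psiFun U Φ (bC p) y := hbCsub p y
        _ ≤ psiFun U Φ ⇑F y := psi_mono hM (hbCm p) hCp hFm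
            (fun z => F.norm_coe_le_norm z) (hble p hp) y
  -- bounds on K
  have hKbound : ∀ y : K, m - 2 * ε ≤ (F y).re ∧ (F y).re ≤ M := by
    intro y
    rw [hFre, hF0app y]
    constructor
    · exact le_max_left _ _
    · apply max_le
      · linarith
      · apply Finset.sup'_le
        intro p hp
        have h1 : c p * ((hbar p) y).re ≤ 0 := by
          have := mul_le_mul_of_nonneg_left (hre0 p y) (hc0 p)
          simpa using this
        have h2 := hMb p
        linarith
  -- trace bounds
  have htrace : ∀ x : ↥(Uᶜ), φ x - 2 * ε ≤ (F x.1).re ∧ (F x.1).re ≤ φ x := by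
    intro x
    rw [hFre, hF0app x.1]
    constructor
    · -- lower bound via covering
      have hx := htcov (Set.mem_univ x)
      rw [Set.mem_iUnion₂] at hx
      obtain ⟨p, hp, hxN⟩ := hx
      obtain ⟨hx1, hx2⟩ := hxN
      have h1 : φ x - 2 * ε ≤ φ p - ε + c p * ((hbar p) x.1).re := by
        have h2 : c p * ((hbar p) x.1).re = -(c p * (-((hbar p) x.1).re)) := by ring
        rw [h2]
        linarith
      refine h1.trans (le_max_of_le_right ?_)
      exact Finset.le_sup' (fun q => φ q - ε + c q * ((hbar q) x.1).re) hp
    · apply max_le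
      · linarith [hm x]
      · apply Finset.sup'_le
        intro p hp
        exact hcle p x
  exact ⟨F, hFim, hFsub, htrace, hKbound⟩

end MainB

section MainC
set_option linter.unusedSectionVars false
set_option maxHeartbeats 1000000

variable {K : Type*} [MetricSpace K] [CompactSpace K] [MeasurableSpace K] [BorelSpace K]
variable {U : Set K} {Φ : (↥U → ℂ) → (↥U → ℂ)}

lemma norm_re_of_im_zero {z : ℂ} (h : z.im = 0) : ‖z‖ = |z.re| := by
  have hz : z = ((z.re : ℝ) : ℂ) := Complex.ext rfl (by simp [h])
  calc ‖z‖ = ‖((z.re : ℝ) : ℂ)‖ := by rw [← hz]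
    _ = |z.re| := by rw [Complex.norm_real, Real.norm_eq_abs]

lemma fixed_approx (hUopen : IsOpen U) (hM : IsMarkovOperator Φ)
    (hSF : HasStrongFeller Φ) (hA : CondA U Φ) (hne : (Uᶜ : Set K).Nonempty)
    [CompactSpace ↥(Uᶜ : Set K)]
    (φ : C(↥(Uᶜ), ℝ)) {ε : ℝ} (hε : 0 < ε) :
    ∃ g : C(K, ℂ), psiFun U Φ ⇑g = ⇑g ∧ (∀ y, (g y).im = 0) ∧
      (∀ y : K, ‖g y‖ ≤ ‖φ‖ + ε) ∧ (∀ x : ↥(Uᶜ), ‖g x.1 - ((φ x : ℝ) : ℂ)‖ ≤ ε) := by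
  haveI : Nonempty ↥(Uᶜ : Set K) := hne.to_subtype
  have habs : ∀ x : ↥(Uᶜ), |φ x| ≤ ‖φ‖ := fun x => by
    have := φ.norm_coe_le_norm x
    rwa [Real.norm_eq_abs] at this
  have hm : ∀ x : ↥(Uᶜ), -‖φ‖ ≤ φ x := fun x => (abs_le.mp (habs x)).1
  have hMb : ∀ x : ↥(Uᶜ), φ x ≤ ‖φ‖ := fun x => (abs_le.mp (habs x)).2
  obtain ⟨F, hFim, hFsub, htrace, hKb⟩ :=
    subsolution_approx hUopen hM hA hne φ hm hMb (by linarith : (0:ℝ) < ε / 4)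
  obtain ⟨g, hgfix, hgbd, hgim, hgge, hgle⟩ :=
    fixedPoint_of_subsolution hUopen hM hSF hA F hFim hFsub
  refine ⟨g, hgfix, hgim, ?_, ?_⟩
  · intro y
    have h1 : (g y).re ≤ ‖φ‖ := hgle ‖φ‖ (fun z => (hKb z).2) y
    have h2 : -‖φ‖ - 2 * (ε / 4) ≤ (g y).re := by
      have h3 : (F y).re ≤ (g y).re := (Complex.le_def.mp (hgge y)).1
      linarith [(hKb y).1]
    rw [norm_re_of_im_zero (hgim y), abs_le]
    constructor <;> [linarith; linarith [norm_nonneg φ]]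
  · intro x
    have he : g x.1 = F x.1 := hgbd x.1 x.2
    rw [he]
    have him : (F x.1 - ((φ x : ℝ) : ℂ)).im = 0 := by
      simp [Complex.sub_im, hFim x.1]
    rw [norm_re_of_im_zero him]
    have hre : (F x.1 - ((φ x : ℝ) : ℂ)).re = (F x.1).re - φ x := by
      simp [Complex.sub_re]
    rw [hre, abs_le]
    obtain ⟨ht1, ht2⟩ := htrace x
    constructor <;> linarith

lemma trace_exact (hUopen : IsOpen U) (hM : IsMarkovOperator Φ)
    (hSF : HasStrongFeller Φ) (hA : CondA U Φ) (hne : (Uᶜ : Set K).Nonempty)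
    [CompactSpace ↥(Uᶜ : Set K)]
    (ψ : C(↥(Uᶜ), ℝ)) :
    ∃ g : C(K, ℂ), g ∈ (Algebra.adjoin ℂ
        {h : C(K, ℂ) | psiFun U Φ ⇑h = ⇑h}).topologicalClosure ∧
      ∀ x : ↥(Uᶜ), g x.1 = ((ψ x : ℝ) : ℂ) := by
  classical
  have hEx : ∀ (φ : C(↥(Uᶜ), ℝ)) (k : ℕ), ∃ g : C(K, ℂ),
      psiFun U Φ ⇑g = ⇑g ∧ (∀ y, (g y).im = 0) ∧
      (∀ y : K, ‖g y‖ ≤ ‖φ‖ + (2⁻¹ : ℝ) ^ k) ∧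
      (∀ x : ↥(Uᶜ), ‖g x.1 - ((φ x : ℝ) : ℂ)‖ ≤ (2⁻¹ : ℝ) ^ k) := fun φ k =>
    fixed_approx hUopen hM hSF hA hne φ (pow_pos (by norm_num) k)
  choose gg h1 h2 h3 h4 using hEx
  set tr : C(K, ℂ) → C(↥(Uᶜ), ℝ) := fun g =>
    ⟨fun x => (g x.1).re,
      Complex.continuous_re.comp (g.continuous.comp continuous_subtype_val)⟩ with htr
  set φs : ℕ → C(↥(Uᶜ), ℝ) := fun k =>
    Nat.rec ψ (fun k φk => φk - tr (gg φk k)) k with hφs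
  have hφsS : ∀ k, φs (k + 1) = φs k - tr (gg (φs k) k) := fun k => rfl
  set Gk : ℕ → C(K, ℂ) := fun k => gg (φs k) k with hGk
  -- residual norms
  have hφsn : ∀ k, ‖φs (k + 1)‖ ≤ (2⁻¹ : ℝ) ^ k := by
    intro k
    rw [hφsS k]
    apply ContinuousMap.norm_le _ (by positivity) |>.mpr
    intro x
    have hb := h4 (φs k) k x
    have he : (φs k - tr (gg (φs k) k)) x = φs k x - (gg (φs k) k x.1).re := by
      simp [htr]
    rw [he, Real.norm_eq_abs]
    have h5 : |((gg (φs k) k) x.1 - ((φs k x : ℝ) : ℂ)).re| ≤ (2⁻¹ : ℝ) ^ k := by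
      refine le_trans ?_ hb
      rw [norm_re_of_im_zero (by simp [Complex.sub_im, h2 (φs k) k x.1])]
    have h6 : ((gg (φs k) k) x.1 - ((φs k x : ℝ) : ℂ)).re
        = (gg (φs k) k x.1).re - φs k x := by simp [Complex.sub_re]
    rw [h6] at h5
    rw [abs_sub_comm]
    exact h5
  -- norm bound for the pieces
  have hGkb : ∀ k, ‖Gk k‖ ≤ (‖ψ‖ + 3) * (2⁻¹ : ℝ) ^ k := by
    intro k
    apply ContinuousMap.norm_le _ (by positivity) |>.mpr
    intro y
    have hb := h3 (φs k) k y
    match k with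
    | 0 =>
      have h8 : ‖φs 0‖ = ‖ψ‖ := rfl
      rw [h8] at hb
      calc ‖Gk 0 y‖ ≤ ‖ψ‖ + (2⁻¹ : ℝ) ^ 0 := hb
        _ ≤ (‖ψ‖ + 3) * (2⁻¹ : ℝ) ^ 0 := by norm_num
    | Nat.succ j =>
      have hn := hφsn j
      have hpow : (2⁻¹ : ℝ) ^ j = 2 * (2⁻¹ : ℝ) ^ (j + 1) := by ring
      have hψ : (0:ℝ) ≤ ‖ψ‖ := norm_nonneg ψ
      have hp : (0:ℝ) ≤ (2⁻¹ : ℝ) ^ (j+1) := by positivity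
      calc ‖Gk (j+1) y‖ ≤ ‖φs (j+1)‖ + (2⁻¹ : ℝ) ^ (j+1) := hb
        _ ≤ 2 * (2⁻¹ : ℝ) ^ (j+1) + (2⁻¹ : ℝ) ^ (j+1) := by
            rw [hpow] at hn; linarith
        _ ≤ (‖ψ‖ + 3) * (2⁻¹ : ℝ) ^ (j+1) := by nlinarith
  -- summability
  have hsum : Summable Gk := by
    apply Summable.of_norm_bounded (Summable.mul_left (‖ψ‖ + 3)
      (summable_geometric_of_lt_one (by norm_num) (by norm_num))) hGkb
  set g : C(K, ℂ) := ∑' k, Gk k with hg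
  have hHasSum : HasSum Gk g := hsum.hasSum
  refine ⟨g, ?_, ?_⟩
  · -- membership in the closed subalgebra
    apply IsClosed.mem_of_tendsto (Subalgebra.isClosed_topologicalClosure _)
      hHasSum.tendsto_sum_nat
    apply Filter.Eventually.of_forall
    intro n
    apply Subalgebra.sum_mem
    intro k _
    exact (Algebra.adjoin ℂ _).le_topologicalClosure
      (Algebra.subset_adjoin (h1 (φs k) k))
  · intro x
    have hx : HasSum (fun k => Gk k x.1) (g x.1) :=
      hHasSum.mapL (ContinuousMap.evalCLM ℂ x.1)
    -- partial sums telescope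
    have hval : ∀ k, Gk k x.1 = ((φs k x - φs (k + 1) x : ℝ) : ℂ) := by
      intro k
      apply Complex.ext
      · have : (φs (k+1)) x = φs k x - (Gk k x.1).re := by
          rw [hφsS k]; simp [htr, hGk]
        simp only [Complex.ofReal_re]
        linarith [this]
      · simp [hGk, h2 (φs k) k x.1]
    have hps : ∀ n, (∑ k ∈ Finset.range n, Gk k x.1) = ((ψ x - φs n x : ℝ) : ℂ) := by
      intro n
      induction n with
      | zero => simp [hφs]
      | succ n ih =>
        rw [Finset.sum_range_succ, ih, hval n]
        push_cast
        ring
    have hlim0 : Tendsto (fun n => φs n x) atTop (𝓝 0) := by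
      apply squeeze_zero_norm' (a := fun n => 2 * (2⁻¹ : ℝ) ^ n)
      · rw [Filter.eventually_atTop]
        refine ⟨1, fun n hn => ?_⟩
        obtain ⟨j, rfl⟩ : ∃ j, n = j + 1 := ⟨n - 1, (Nat.succ_pred_eq_of_pos hn).symm⟩
        have h7 := hφsn j
        have hpow : (2⁻¹ : ℝ) ^ j = 2 * (2⁻¹ : ℝ) ^ (j + 1) := by ring
        rw [hpow] at h7
        have h9 : ‖(φs (j+1)) x‖ ≤ ‖φs (j+1)‖ := (φs (j+1)).norm_coe_le_norm x
        show ‖(φs (j+1)) x‖ ≤ 2 * (2⁻¹ : ℝ) ^ (j+1)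
        linarith
      · have hgeo : Tendsto (fun n : ℕ => (2⁻¹ : ℝ) ^ n) atTop (𝓝 0) :=
          tendsto_pow_atTop_nhds_zero_of_lt_one (by norm_num) (by norm_num)
        have := hgeo.const_mul 2
        simpa using this
    have hlim1 : Tendsto (fun n => (∑ k ∈ Finset.range n, Gk k x.1)) atTop
        (𝓝 ((ψ x : ℝ) : ℂ)) := by
      rw [show (fun n => (∑ k ∈ Finset.range n, Gk k x.1))
          = fun n => ((ψ x - φs n x : ℝ) : ℂ) from funext hps]
      have : Tendsto (fun n => (ψ x - φs n x : ℝ)) atTop (𝓝 (ψ x)) := by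
        have := tendsto_const_nhds.sub hlim0 (f := fun _ : ℕ => ψ x)
        simpa using this
      exact (Complex.continuous_ofReal.tendsto _).comp this
    exact tendsto_nhds_unique hx.tendsto_sum_nat hlim1

end MainC


set_option maxHeartbeats 1000000 in
/-- The restriction map from the norm-closed subalgebra `A` of
`C(K)` generated by `Fix(Ψ)` to `C(∂U)` is surjective. -/
theorem stmt12 {K : Type*} [MetricSpace K] [CompactSpace K]
    [MeasurableSpace K] [BorelSpace K]
    (U : Set K) (hUopen : IsOpen U) (hUdense : Dense U)
    (hbd : ∃ a b : K, a ∈ Uᶜ ∧ b ∈ Uᶜ ∧ a ≠ b)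
    (Φ : (↥U → ℂ) → (↥U → ℂ))
    (hM : IsMarkovOperator Φ) (hSF : HasStrongFeller Φ)
    (hA : CondA U Φ)
    (f : C(↥(Uᶜ), ℂ)) :
    ∃ g ∈ (Algebra.adjoin ℂ
        {h : C(K, ℂ) | psiFun U Φ ⇑h = ⇑h}).topologicalClosure,
      ∀ x : ↥(Uᶜ), g x.1 = f x := by
  obtain ⟨a, b, ha, hb, hab⟩ := hbd
  have hne : (Uᶜ : Set K).Nonempty := ⟨a, ha⟩
  haveI : CompactSpace ↥(Uᶜ : Set K) :=
    isCompact_iff_compactSpace.mp (hUopen.isClosed_compl.isCompact)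
  set ψre : C(↥(Uᶜ), ℝ) := ⟨fun x => (f x).re,
    Complex.continuous_re.comp f.continuous⟩ with hψre
  set ψim : C(↥(Uᶜ), ℝ) := ⟨fun x => (f x).im,
    Complex.continuous_im.comp f.continuous⟩ with hψim
  obtain ⟨gre, hgremem, hgretr⟩ := trace_exact hUopen hM hSF hA hne ψre
  obtain ⟨gim, hgimmem, hgimtr⟩ := trace_exact hUopen hM hSF hA hne ψim
  refine ⟨gre + Complex.I • gim, ?_, ?_⟩
  · exact add_mem hgremem (Subalgebra.smul_mem _ hgimmem _)
  · intro x
    have e1 := hgretr x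
    have e2 := hgimtr x
    show gre x.1 + Complex.I * gim x.1 = f x
    rw [e1, e2]
    have : ((f x).re : ℂ) + Complex.I * ((f x).im : ℂ) = f x := by
      rw [mul_comm]
      exact Complex.re_add_im (f x)
    simpa [hψre, hψim] using this
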